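/- Let r ∈ ℕ with r ≥ 2 and p ∈ (0,1). Let N₁ be negative binomial with parameters r and p, and N₂ be negative binomial with parameters r and 1−p, independent. Then the log odds estimator δ̂ = −H_{N₁−1} + H_{N₂−1} is unbiased for the log odds: Σ_{n₁≥r} Σ_{n₂≥r} C(n₁−1, r−1) p^r (1−p)^{n₁−r} · C(n₂−1, r−1) (1−p)^r p^{n₂−r} · (−H_{n₁−1} + H_{n₂−1}) = log(p/(1−p)). -/

import Mathlib

open scoped BigOperators

/-- Expectation of `f(N)` where `N` is negative binomial with parameters `s` and `q`:
`E[f(N)] = Σ_{n ≥ s} f(n) C(n−1, s−1) q^s (1−q)^{n−s}`, written with `n = s + k`. -/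
noncomputable def negbinExp (s : ℕ) (q : ℝ) (f : ℕ → ℝ) : ℝ :=
  ∑' k : ℕ, ((s + k - 1).choose (s - 1) : ℝ) * q ^ s * (1 - q) ^ k * f (s + k)

/-- Expectation of `f(N₁, N₂)` for independent negative binomials with parameters
`(s₁, q₁)` and `(s₂, q₂)`. -/
noncomputable def negbinExp2 (s₁ : ℕ) (q₁ : ℝ) (s₂ : ℕ) (q₂ : ℝ) (f : ℕ → ℕ → ℝ) : ℝ :=
  ∑' k₁ : ℕ, ∑' k₂ : ℕ,
    ((s₁ + k₁ - 1).choose (s₁ - 1) : ℝ) * q₁ ^ s₁ * (1 - q₁) ^ k₁ *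
      (((s₂ + k₂ - 1).choose (s₂ - 1) : ℝ) * q₂ ^ s₂ * (1 - q₂) ^ k₂) *
      f (s₁ + k₁) (s₂ + k₂)

/-- The m-th harmonic number `H_m = Σ_{k=1}^m 1/k`, `H_0 = 0`. -/
noncomputable def H (m : ℕ) : ℝ := ∑ k ∈ Finset.range m, (1 : ℝ) / (k + 1)

open Finset in


lemma H_succ (m : ℕ) : H (m + 1) = H m + 1 / (m + 1) := by
  simp [H, Finset.sum_range_succ]

lemma ident : ∀ (s K : ℕ), ∑ m ∈ Finset.range K, ((K - 1 - m + s).choose s : ℝ) / (m + 1)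
    = ((K + s).choose s : ℝ) * (H (K + s) - H s) := by
  intro s
  induction s with
  | zero => intro K; simp [H]
  | succ s ih =>
    intro K
    induction K with
    | zero => simp
    | succ K ihK =>
      have step : ∀ m ∈ Finset.range (K + 1),
          ((K + 1 - 1 - m + (s + 1)).choose (s + 1) : ℝ) / (m + 1)
          = ((K - m + s).choose s : ℝ) / (m + 1)
            + ((K - m + s).choose (s + 1) : ℝ) / (m + 1) := by
        intro m hm
        have h1 : K + 1 - 1 - m + (s + 1) = (K - m + s) + 1 := by omega
        rw [h1, Nat.choose_succ_succ]
        push_cast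
        ring
      rw [Finset.sum_congr rfl step, Finset.sum_add_distrib]
      have e1 : ∑ m ∈ Finset.range (K + 1), ((K - m + s).choose s : ℝ) / (m + 1)
          = ((K + 1 + s).choose s : ℝ) * (H (K + 1 + s) - H s) := by
        rw [← ih (K + 1)]
        apply Finset.sum_congr rfl
        intro m hm
        simp only [Finset.mem_range] at hm
        norm_num
      have e2 : ∑ m ∈ Finset.range (K + 1), ((K - m + s).choose (s + 1) : ℝ) / (m + 1)
          = ((K + (s + 1)).choose (s + 1) : ℝ) * (H (K + (s + 1)) - H (s + 1)) := by
        rw [← ihK, Finset.sum_range_succ]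
        have : (K - K + s).choose (s + 1) = 0 := by
          apply Nat.choose_eq_zero_of_lt; omega
        rw [this]
        simp only [Nat.cast_zero, zero_div, add_zero]
        apply Finset.sum_congr rfl
        intro m hm
        simp only [Finset.mem_range] at hm
        congr 3
        omega
      rw [e1, e2]
      -- now pure algebra
      have hpascalN : (K + 1 + (s + 1)).choose (s + 1)
          = (K + 1 + s).choose s + (K + (s + 1)).choose (s + 1) := by
        have h : K + 1 + (s + 1) = (K + (s + 1)) + 1 := by omega
        rw [h, Nat.choose_succ_succ]
        congr 2
        omega
      have hpascal : ((K + 1 + (s + 1)).choose (s + 1) : ℝ)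
          = ((K + 1 + s).choose s : ℝ) + ((K + (s + 1)).choose (s + 1) : ℝ) := by
        exact_mod_cast hpascalN
      have hkey : ((K + 1 + (s + 1)).choose (s + 1) : ℝ) * (s + 1)
          = (K + s + 2) * ((K + 1 + s).choose s : ℝ) := by
        have := Nat.add_one_mul_choose_eq (K + s + 1) s
        -- (K+s+2) * choose (K+s+1) s = choose (K+s+2) (s+1) * (s+1)
        have h2 : K + s + 1 + 1 = K + 1 + (s + 1) := by omega
        have h3 : K + s + 1 = K + 1 + s := by omega
        rw [h2, h3] at this
        have := congrArg (Nat.cast (R := ℝ)) this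
        push_cast at this
        linarith [this]
      have hH1 : H (K + 1 + (s + 1)) = H (K + 1 + s) + 1 / (K + s + 2) := by
        have : K + 1 + (s + 1) = (K + 1 + s) + 1 := by omega
        rw [this, H_succ]
        norm_num
        ring_nf
      have hH2 : H (s + 1) = H s + 1 / (s + 1) := H_succ s
      have hH3 : H (K + (s + 1)) = H (K + 1 + s) := by congr 1; omega
      have hc2 : ((K + (s + 1)).choose (s + 1) : ℝ) = ((K + 1 + (s + 1)).choose (s + 1) : ℝ) - ((K + 1 + s).choose s : ℝ) := by
        linarith [hpascal]
      rw [hH1, hH2, hH3, hc2]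
      have hs1 : (s : ℝ) + 1 ≠ 0 := by positivity
      have hks : (K : ℝ) + s + 2 ≠ 0 := by positivity
      field_simp
      nlinarith [hkey]

open Finset in
lemma norm1 (r : ℕ) (hr : 1 ≤ r) (q : ℝ) (h0 : 0 < q) (h1 : q < 1) : HasSum (fun k : ℕ => ((r + k - 1).choose (r - 1) : ℝ) * q ^ r * (1 - q) ^ k) 1 := by
  set x := 1 - q with hxdef
  have hq0 : q ≠ 0 := ne_of_gt h0
  have hx0 : 0 < x := by simp only [hxdef]; linarith
  have hx1 : x < 1 := by simp only [hxdef]; linarith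
  have hxn : ‖x‖ < 1 := by rw [Real.norm_eq_abs, abs_of_pos hx0]; exact hx1
  have hg := hasSum_choose_mul_geometric_of_norm_lt_one (r - 1) hxn
  have h1x : 1 - x = q := by simp [hxdef]
  have hgq : (1 : ℝ) / (1 - x) ^ (r - 1 + 1) = 1 / q ^ r := by
    rw [h1x, show r - 1 + 1 = r by omega]
  rw [hgq] at hg
  have := hg.mul_left (q ^ r)
  have hval : q ^ r * (1 / q ^ r) = 1 := by
    field_simp
  rw [hval] at this
  convert this using 2 with k
  · rfl
  rw [show r + k - 1 = k + (r - 1) by omega]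
  ring

lemma keyA (r : ℕ) (hr : 1 ≤ r) (q : ℝ) (h0 : 0 < q) (h1 : q < 1) : HasSum (fun k : ℕ =>
    ((r + k - 1).choose (r - 1) : ℝ) * q ^ r * (1 - q) ^ k * H (r + k - 1))
    (H (r - 1) - Real.log q) := by
  set x := 1 - q with hxdef
  have hq0 : q ≠ 0 := ne_of_gt h0
  have hx0 : 0 < x := by simp only [hxdef]; linarith
  have hx1 : x < 1 := by simp only [hxdef]; linarith
  have habs : |x| < 1 := by rw [abs_of_pos hx0]; exact hx1
  have hxn : ‖x‖ < 1 := habs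
  have h1x : 1 - x = q := by simp [hxdef]
  -- the two series
  set f : ℕ → ℝ := fun n => x ^ (n + 1) / (n + 1) with hfdef
  set g : ℕ → ℝ := fun n => ((n + (r - 1)).choose (r - 1) : ℝ) * x ^ n with hgdef
  have hf : HasSum f (-Real.log q) := by
    have := Real.hasSum_pow_div_log_of_abs_lt_one habs
    rwa [h1x] at this
  have hg : HasSum g (1 / q ^ r) := by
    have := hasSum_choose_mul_geometric_of_norm_lt_one (r - 1) hxn
    rwa [h1x, show r - 1 + 1 = r by omega] at this
  have hfn : Summable fun n => ‖f n‖ := by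
    have : (fun n => ‖f n‖) = f := by
      funext n; exact Real.norm_of_nonneg (by positivity)
    rw [this]; exact hf.summable
  have hgn : Summable fun n => ‖g n‖ := by
    have : (fun n => ‖g n‖) = g := by
      funext n; exact Real.norm_of_nonneg (by positivity)
    rw [this]; exact hg.summable
  have hC : HasSum (fun n => ∑ k ∈ Finset.range (n + 1), f k * g (n - k))
      (-Real.log q * (1 / q ^ r)) := by
    have := hasSum_sum_range_mul_of_summable_norm hfn hgn
    rwa [hf.tsum_eq, hg.tsum_eq] at this
  -- identify coefficients
  have hcoef : ∀ n : ℕ, ∑ k ∈ Finset.range (n + 1), f k * g (n - k)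
      = ((r + (n + 1) - 1).choose (r - 1) : ℝ) * x ^ (n + 1) * (H (r + (n + 1) - 1) - H (r - 1)) := by
    intro n
    have e1 : ∀ k ∈ Finset.range (n + 1), f k * g (n - k)
        = ((n - k + (r - 1)).choose (r - 1) : ℝ) / (k + 1) * x ^ (n + 1) := by
      intro k hk
      simp only [Finset.mem_range] at hk
      simp only [hfdef, hgdef]
      rw [show x ^ (n + 1) = x ^ (k + 1) * x ^ (n - k) by rw [← pow_add]; congr 1; omega]
      ring
    rw [Finset.sum_congr rfl e1, ← Finset.sum_mul]
    have e2 : ∑ k ∈ Finset.range (n + 1), ((n - k + (r - 1)).choose (r - 1) : ℝ) / (k + 1)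
        = ((n + 1 + (r - 1)).choose (r - 1) : ℝ) * (H (n + 1 + (r - 1)) - H (r - 1)) := by
      rw [← ident (r - 1) (n + 1)]
      norm_num
    rw [e2, show r + (n + 1) - 1 = n + 1 + (r - 1) by omega]
    ring
  simp only [hcoef] at hC
  -- shift index
  set a : ℕ → ℝ := fun j => ((r + j - 1).choose (r - 1) : ℝ) * x ^ j * (H (r + j - 1) - H (r - 1)) with hadef
  have ha0 : a 0 = 0 := by simp [hadef]
  have hCa : HasSum (fun n => a (n + 1)) (-Real.log q * (1 / q ^ r)) := hC
  have hA : HasSum a (-Real.log q * (1 / q ^ r)) := by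
    have := (hasSum_nat_add_iff (f := a) 1).mp hCa
    simpa [ha0] using this
  have hA2 := hA.mul_left (q ^ r)
  have hval : q ^ r * (-Real.log q * (1 / q ^ r)) = -Real.log q := by
    field_simp
  rw [hval] at hA2
  have hP := (norm1 r hr q h0 h1).mul_left (H (r - 1))
  rw [mul_one] at hP
  have := hA2.add hP
  have heq : (fun k => q ^ r * a k + H (r - 1) * (((r + k - 1).choose (r - 1) : ℝ) * q ^ r * (1 - q) ^ k))
      = fun k => ((r + k - 1).choose (r - 1) : ℝ) * q ^ r * (1 - q) ^ k * H (r + k - 1) := by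
    funext k
    simp only [hadef, ← hxdef]
    ring
  rw [heq] at this
  convert this using 1
  · rfl
  ring

theorem log_odds_estimator_unbiased (r : ℕ) (hr : 2 ≤ r) (p : ℝ)
    (hp0 : 0 < p) (hp1 : p < 1) :
    negbinExp2 r p r (1 - p) (fun n₁ n₂ => -H (n₁ - 1) + H (n₂ - 1)) =
      Real.log (p / (1 - p)) := by
  have hr1 : 1 ≤ r := by omega
  have h1p0 : (0:ℝ) < 1 - p := by linarith
  have h1p1 : (1:ℝ) - p < 1 := by linarith
  have key1 := keyA r hr1 p hp0 hp1
  have key2 := keyA r hr1 (1 - p) h1p0 h1p1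
  have n1 := norm1 r hr1 p hp0 hp1
  have n2 := norm1 r hr1 (1 - p) h1p0 h1p1
  have hinner : ∀ k₁ : ℕ,
      (∑' k₂ : ℕ, ((r + k₁ - 1).choose (r - 1) : ℝ) * p ^ r * (1 - p) ^ k₁ *
        (((r + k₂ - 1).choose (r - 1) : ℝ) * (1 - p) ^ r * (1 - (1 - p)) ^ k₂) *
        (-H (r + k₁ - 1) + H (r + k₂ - 1)))
      = ((r + k₁ - 1).choose (r - 1) : ℝ) * p ^ r * (1 - p) ^ k₁ *
          (-H (r + k₁ - 1) * 1 + (H (r - 1) - Real.log (1 - p))) := by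
    intro k₁
    have h := ((n2.mul_left (-H (r + k₁ - 1))).add key2).mul_left
      (((r + k₁ - 1).choose (r - 1) : ℝ) * p ^ r * (1 - p) ^ k₁)
    have hfun : (fun k₂ : ℕ => ((r + k₁ - 1).choose (r - 1) : ℝ) * p ^ r * (1 - p) ^ k₁ *
        (-H (r + k₁ - 1) * (((r + k₂ - 1).choose (r - 1) : ℝ) * (1 - p) ^ r * (1 - (1 - p)) ^ k₂)
          + ((r + k₂ - 1).choose (r - 1) : ℝ) * (1 - p) ^ r * (1 - (1 - p)) ^ k₂ * H (r + k₂ - 1)))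
        = fun k₂ : ℕ => ((r + k₁ - 1).choose (r - 1) : ℝ) * p ^ r * (1 - p) ^ k₁ *
          (((r + k₂ - 1).choose (r - 1) : ℝ) * (1 - p) ^ r * (1 - (1 - p)) ^ k₂) *
          (-H (r + k₁ - 1) + H (r + k₂ - 1)) := by funext k₂; ring
    rw [hfun] at h
    exact h.tsum_eq
  rw [negbinExp2]
  rw [tsum_congr hinner]
  have hout := (key1.mul_left (-1)).add
    (n1.mul_left (H (r - 1) - Real.log (1 - p)))
  have hfun2 : (fun k₁ : ℕ => -1 * (((r + k₁ - 1).choose (r - 1) : ℝ) * p ^ r * (1 - p) ^ k₁ * H (r + k₁ - 1))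
      + (H (r - 1) - Real.log (1 - p)) * (((r + k₁ - 1).choose (r - 1) : ℝ) * p ^ r * (1 - p) ^ k₁))
      = fun k₁ : ℕ => ((r + k₁ - 1).choose (r - 1) : ℝ) * p ^ r * (1 - p) ^ k₁ *
          (-H (r + k₁ - 1) * 1 + (H (r - 1) - Real.log (1 - p))) := by
    funext k₁; ring
  rw [hfun2] at hout
  rw [hout.tsum_eq, Real.log_div hp0.ne' (by linarith)]
  ring
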